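/- Let F be a field and O the split octonion algebra over F. For every v ∈ F³, the map δ₂(v) : O → O defined by (α', u', v', β') ↦ (α' + u'·v, u' + v'×v, (−α' + β' − u'·v)v + v', β' − u'·v) is an F-algebra automorphism of O, i.e. an F-linear bijection satisfying δ₂(v)(a b) = δ₂(v)(a) δ₂(v)(b) for all a, b ∈ O. -/
import Mathlib


namespace OctoPaper

variable (F : Type*) [Field F]

/-- The split (Zorn matrix) octonion algebra over `F`. -/
structure Octo where
  x1 : F
  u : Fin 3 → F
  v : Fin 3 → F
  x8 : F

variable {F}

/-- Dot product on `F³`. -/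
def dot (u v : Fin 3 → F) : F := u 0 * v 0 + u 1 * v 1 + u 2 * v 2

/-- Cross product on `F³`. -/
def cross (u v : Fin 3 → F) : Fin 3 → F :=
  ![u 1 * v 2 - u 2 * v 1, u 2 * v 0 - u 0 * v 2, u 0 * v 1 - u 1 * v 0]

instance : Mul (Octo F) where
  mul x y :=
    ⟨x.x1 * y.x1 + dot x.u y.v,
     fun i => x.x1 * y.u i + y.x8 * x.u i - cross x.v y.v i,
     fun i => y.x1 * x.v i + x.x8 * y.v i + cross x.u y.u i,
     x.x8 * y.x8 + dot x.v y.u⟩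

instance : Add (Octo F) where add x y := ⟨x.x1 + y.x1, x.u + y.u, x.v + y.v, x.x8 + y.x8⟩
instance : Neg (Octo F) where neg x := ⟨-x.x1, -x.u, -x.v, -x.x8⟩
instance : Sub (Octo F) where sub x y := x + -y
instance : SMul F (Octo F) where smul c x := ⟨c * x.x1, c • x.u, c • x.v, c * x.x8⟩
instance : One (Octo F) where one := ⟨1, 0, 0, 1⟩
instance : Zero (Octo F) where zero := ⟨0, 0, 0, 0⟩

/-- Trace of an octonion. -/
def tr (x : Octo F) : F := x.x1 + x.x8

/-- Norm of an octonion. -/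
def onorm (x : Octo F) : F := x.x1 * x.x8 - dot x.u x.v

/-- Conjugate of an octonion. -/
def conj (x : Octo F) : Octo F := ⟨x.x8, -x.u, -x.v, x.x1⟩

/-- `g` is an `F`-algebra automorphism of the split octonion algebra:
an `F`-linear bijection preserving multiplication. -/
def IsAut (g : Octo F → Octo F) : Prop :=
  Function.Bijective g ∧
  (∀ x y : Octo F, g (x + y) = g x + g y) ∧
  (∀ (c : F) (x : Octo F), g (c • x) = c • g x) ∧
  (∀ x y : Octo F, g (x * y) = g x * g y)

/-- The automorphism `ρ(g)` of `O` attached to `g ∈ SL₃(F)`. -/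
def rho (g : Matrix.SpecialLinearGroup (Fin 3) F) (x : Octo F) : Octo F :=
  ⟨x.x1, Matrix.vecMul x.u (g : Matrix (Fin 3) (Fin 3) F),
   Matrix.vecMul x.v (Matrix.transpose (↑(g⁻¹) : Matrix (Fin 3) (Fin 3) F)), x.x8⟩

/-- The automorphism `ℏ` of `O`. -/
def hbar (x : Octo F) : Octo F := ⟨x.x8, -x.v, -x.u, x.x1⟩

/-- The automorphism `δ₁(u)` of `O`. -/
def delta1 (w : Fin 3 → F) (y : Octo F) : Octo F :=
  ⟨y.x1 - dot w y.v,
   fun i => (y.x1 - y.x8 - dot w y.v) * w i + y.u i,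
   fun i => y.v i - cross y.u w i,
   y.x8 + dot w y.v⟩

/-- The automorphism `δ₂(v)` of `O`. -/
def delta2 (w : Fin 3 → F) (y : Octo F) : Octo F :=
  ⟨y.x1 + dot y.u w,
   fun i => y.u i + cross y.v w i,
   fun i => (-y.x1 + y.x8 - dot y.u w) * w i + y.v i,
   y.x8 - dot y.u w⟩

end OctoPaper

open OctoPaper

namespace OctoPaper
variable {F : Type*} [Field F]

lemma add_def' (x y : Octo F) : x + y = ⟨x.x1 + y.x1, x.u + y.u, x.v + y.v, x.x8 + y.x8⟩ := rfl

lemma smul_def' (c : F) (x : Octo F) : c • x = ⟨c * x.x1, c • x.u, c • x.v, c * x.x8⟩ := rfl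

lemma mul_def' (x y : Octo F) : x * y =
    ⟨x.x1 * y.x1 + dot x.u y.v,
     fun i => x.x1 * y.u i + y.x8 * x.u i - cross x.v y.v i,
     fun i => y.x1 * x.v i + x.x8 * y.v i + cross x.u y.u i,
     x.x8 * y.x8 + dot x.v y.u⟩ := rfl

end OctoPaper

/-- For every `v ∈ F³` the map `δ₂(v)` is an `F`-algebra automorphism of the
split octonions. -/
theorem delta2_isAut (F : Type*) [Field F] (v : Fin 3 → F) :
    IsAut (delta2 v : Octo F → Octo F) := by
  have key : ∀ y : Octo F, ∀ w : Fin 3 → F, delta2 w (delta2 (-w) y) = y := by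
    rintro ⟨a, u, z, b⟩ w
    simp only [delta2, dot, cross, Octo.mk.injEq, Pi.neg_apply,
      Matrix.cons_val_zero, Matrix.cons_val_one, Matrix.head_cons,
      Matrix.cons_val_two, Matrix.tail_cons]
    refine ⟨by ring, funext fun i => ?_, funext fun i => ?_, by ring⟩ <;>
      fin_cases i <;> simp <;> ring
  have key' : ∀ y : Octo F, delta2 (-v) (delta2 v y) = y := by
    intro y
    have := key y (-v)
    rwa [neg_neg] at this
  refine ⟨Function.bijective_iff_has_inverse.mpr ⟨delta2 (-v), key', fun y => key y v⟩,
    ?_, ?_, ?_⟩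
  · rintro ⟨a, u, z, b⟩ ⟨a', u', z', b'⟩
    simp only [add_def', delta2, dot, cross, Octo.mk.injEq, Pi.add_apply]
    refine ⟨by ring, funext fun i => ?_, funext fun i => ?_, by ring⟩ <;>
      fin_cases i <;> simp <;> ring
  · rintro c ⟨a, u, z, b⟩
    simp only [smul_def', delta2, dot, cross, Octo.mk.injEq, Pi.smul_apply, smul_eq_mul]
    refine ⟨by ring, funext fun i => ?_, funext fun i => ?_, by ring⟩ <;>
      fin_cases i <;> simp <;> ring
  · rintro ⟨a, u, z, b⟩ ⟨a', u', z', b'⟩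
    simp only [mul_def', delta2, dot, cross, Octo.mk.injEq,
      Matrix.cons_val_zero, Matrix.cons_val_one, Matrix.head_cons,
      Matrix.cons_val_two, Matrix.tail_cons]
    refine ⟨by ring, funext fun i => ?_, funext fun i => ?_, by ring⟩ <;>
      fin_cases i <;> simp <;> ring
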